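/- Let p be a place of an RPN with marking M_R(p) (a finite graph of token instances and bonds), and define the corresponding CPN marking M_C(p) as the multiset assigning 1 to each connected component of M_R(p) and multiplicity 𝕂 − #ConCom(M_R(p)) to the idle token (∅,∅), where 𝕂 ≥ #ConCom(M_R(p)). Then this correspondence is injective: if two RPN markings at p yield the same CPN multiset, the RPN markings are equal. -/
import Mathlib


open SimpleGraph

/-- The connected components of an RPN place marking (modelled as a subgraph `H` of the
complete graph on all token instances), each represented as a pair
(vertex set, set of bonds within the component). -/
def compPairs {α : Type*} (H : (⊤ : SimpleGraph α).Subgraph) :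
    Set (Set α × Set (Sym2 α)) :=
  {q | ∃ C : H.coe.ConnectedComponent,
      q.1 = Subtype.val '' C.supp ∧
      q.2 = {e ∈ H.edgeSet | ∀ v ∈ e, v ∈ Subtype.val '' C.supp}}

open Classical in
/-- The CPN marking corresponding to an RPN place marking `H`: the multiset (given by its
count function) assigning 1 to each connected component of `H` and multiplicity
`𝕂 − #ConCom(H)` to the idle token `(∅, ∅)`. -/
noncomputable def cpnMark {α : Type*} (K : ℕ) (H : (⊤ : SimpleGraph α).Subgraph) :
    (Set α × Set (Sym2 α)) → ℕ :=
  fun q =>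
    (if q ∈ compPairs H then 1 else 0) +
    (if q = (∅, ∅) then K - Nat.card H.coe.ConnectedComponent else 0)

lemma idle_not_mem {α : Type*} (H : (⊤ : SimpleGraph α).Subgraph) :
    ((∅, ∅) : Set α × Set (Sym2 α)) ∉ compPairs H := by
  rintro ⟨C, h1, -⟩
  obtain ⟨v, hv⟩ := C.exists_rep
  have : (v : α) ∈ Subtype.val '' C.supp :=
    ⟨v, (ConnectedComponent.mem_supp_iff _ _).mpr hv, rfl⟩
  rw [← h1] at this
  exact this

lemma compPairs_eq {α : Type*} (K : ℕ)
    (H₁ H₂ : (⊤ : SimpleGraph α).Subgraph)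
    (heq : cpnMark K H₁ = cpnMark K H₂) : compPairs H₁ = compPairs H₂ := by
  ext q
  have hq := congrFun heq q
  by_cases hidle : q = (∅, ∅)
  · subst hidle
    simp [idle_not_mem H₁, idle_not_mem H₂]
  · simp only [cpnMark, if_neg hidle, add_zero] at hq
    constructor <;> intro h
    · by_contra h2; simp [h, h2] at hq
    · by_contra h2; simp [h, h2] at hq

lemma mem_verts_of_compPairs {α : Type*}
    {H₁ H₂ : (⊤ : SimpleGraph α).Subgraph}
    (h : compPairs H₁ = compPairs H₂) {v : α} (hv : v ∈ H₁.verts) : v ∈ H₂.verts := by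
  set C := H₁.coe.connectedComponentMk ⟨v, hv⟩ with hC
  have hmem : (Subtype.val '' C.supp,
      {e ∈ H₁.edgeSet | ∀ w ∈ e, w ∈ Subtype.val '' C.supp}) ∈ compPairs H₁ :=
    ⟨C, rfl, rfl⟩
  rw [h] at hmem
  obtain ⟨C', h1, -⟩ := hmem
  have h1' : Subtype.val '' C.supp = Subtype.val '' C'.supp := h1
  have hv1 : v ∈ Subtype.val '' C.supp :=
    ⟨⟨v, hv⟩, (ConnectedComponent.mem_supp_iff _ _).mpr rfl, rfl⟩
  rw [h1'] at hv1
  obtain ⟨w, -, hw2⟩ := hv1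
  rw [← hw2]
  exact w.2

lemma adj_of_compPairs {α : Type*}
    {H₁ H₂ : (⊤ : SimpleGraph α).Subgraph}
    (h : compPairs H₁ = compPairs H₂) {a b : α} (hab : H₁.Adj a b) : H₂.Adj a b := by
  have ha : a ∈ H₁.verts := hab.fst_mem
  have hb : b ∈ H₁.verts := hab.snd_mem
  set C := H₁.coe.connectedComponentMk ⟨a, ha⟩ with hC
  have hmem : (Subtype.val '' C.supp,
      {e ∈ H₁.edgeSet | ∀ w ∈ e, w ∈ Subtype.val '' C.supp}) ∈ compPairs H₁ :=
    ⟨C, rfl, rfl⟩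
  rw [h] at hmem
  obtain ⟨C', -, h2⟩ := hmem
  have h2' : {e ∈ H₁.edgeSet | ∀ w ∈ e, w ∈ Subtype.val '' C.supp} =
      {e ∈ H₂.edgeSet | ∀ v ∈ e, v ∈ Subtype.val '' C'.supp} := h2
  have hadj : H₁.coe.Adj ⟨a, ha⟩ ⟨b, hb⟩ := hab
  have hbC : H₁.coe.connectedComponentMk ⟨b, hb⟩ = C :=
    ConnectedComponent.sound hadj.symm.reachable
  have he : s(a, b) ∈ {e ∈ H₁.edgeSet | ∀ w ∈ e, w ∈ Subtype.val '' C.supp} := by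
    refine ⟨hab, ?_⟩
    intro w hw
    rw [Sym2.mem_iff] at hw
    rcases hw with h | h
    · exact h ▸ ⟨⟨a, ha⟩, (ConnectedComponent.mem_supp_iff _ _).mpr rfl, rfl⟩
    · exact h ▸ ⟨⟨b, hb⟩, (ConnectedComponent.mem_supp_iff _ _).mpr hbC, rfl⟩
  rw [h2'] at he
  exact he.1

/-- The RPN-to-CPN state translation at a place is injective: if two RPN
markings yield the same CPN multiset (components plus idle tokens up to 𝕂), the RPN
markings are equal. -/
theorem stmt14 {α : Type*} [Fintype α] (K : ℕ)
    (H₁ H₂ : (⊤ : SimpleGraph α).Subgraph)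
    (h₁ : Nat.card H₁.coe.ConnectedComponent ≤ K)
    (h₂ : Nat.card H₂.coe.ConnectedComponent ≤ K)
    (heq : cpnMark K H₁ = cpnMark K H₂) : H₁ = H₂ := by
  have hc := compPairs_eq K H₁ H₂ heq
  ext v w
  · exact ⟨fun h => mem_verts_of_compPairs hc h,
      fun h => mem_verts_of_compPairs hc.symm h⟩
  · exact ⟨fun h => adj_of_compPairs hc h, fun h => adj_of_compPairs hc.symm h⟩
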